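/- Let m, k_B, a, ε > 0 be constants. Let Θ, N, φ : ℝ³ → ℝ and u : ℝ³ → ℝ³ be differentiable fields with Θ(x) > 0 and 0 < N(x) < 1 for all x. Define the density ρ := m N a⁻³, the hard-core pressure P := −k_B Θ a⁻³ log(1−N), the canonical fields β := 1/(k_B Θ), ζⁱ := −uⁱ/(k_B Θ), ξ := −m φ/(k_B Θ) − log N + log(1−N) + (3/2) log(2π m k_B Θ/ε²) + m|u|²/(2 k_B Θ), and the force fᵢ := −∂ᵢφ. Then at every point x ∈ ℝ³ the entropy-production expression Σᵢ ζⁱ ρ fᵢ + Σⱼ (ρ uʲ/m) ∂ⱼξ + Σᵢⱼ (ρ uⁱ uʲ + δⁱʲ P) ∂ⱼζⁱ + Σⱼ ρ uʲ (3 k_B Θ/(2m) + P/ρ + |u|²/2 + φ) ∂ⱼβ + a⁻³ Σⱼ uʲ ∂ⱼN/(1−N) − a⁻³ log(1−N) Σⱼ ∂ⱼuʲ equals zero. -/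

import Mathlib

open Real

noncomputable def pd (j : Fin 3) (f : (Fin 3 → ℝ) → ℝ) (x : Fin 3 → ℝ) : ℝ :=
  fderiv ℝ f x (Pi.single j 1)

theorem pd_add {f g : (Fin 3 → ℝ) → ℝ} {x : Fin 3 → ℝ} (j : Fin 3)
    (hf : DifferentiableAt ℝ f x) (hg : DifferentiableAt ℝ g x) :
    pd j (fun y => f y + g y) x = pd j f x + pd j g x := by
  simp [pd, fderiv_fun_add hf hg]

theorem pd_sub {f g : (Fin 3 → ℝ) → ℝ} {x : Fin 3 → ℝ} (j : Fin 3)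
    (hf : DifferentiableAt ℝ f x) (hg : DifferentiableAt ℝ g x) :
    pd j (fun y => f y - g y) x = pd j f x - pd j g x := by
  simp [pd, fderiv_fun_sub hf hg]

theorem pd_neg {f : (Fin 3 → ℝ) → ℝ} {x : Fin 3 → ℝ} (j : Fin 3) :
    pd j (fun y => -(f y)) x = -pd j f x := by
  simp [pd, fderiv_neg]

theorem pd_const {x : Fin 3 → ℝ} (j : Fin 3) (c : ℝ) :
    pd j (fun _ => c) x = 0 := by
  simp [pd]

theorem pd_mul {f g : (Fin 3 → ℝ) → ℝ} {x : Fin 3 → ℝ} (j : Fin 3)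
    (hf : DifferentiableAt ℝ f x) (hg : DifferentiableAt ℝ g x) :
    pd j (fun y => f y * g y) x = f x * pd j g x + g x * pd j f x := by
  simp [pd, fderiv_fun_mul hf hg]

theorem pd_inv {g : (Fin 3 → ℝ) → ℝ} {x : Fin 3 → ℝ} (j : Fin 3)
    (hg : DifferentiableAt ℝ g x) (h0 : g x ≠ 0) :
    pd j (fun y => (g y)⁻¹) x = -pd j g x / g x ^ 2 := by
  have h := ((hasDerivAt_inv h0).comp_hasFDerivAt x hg.hasFDerivAt).fderiv
  simp only [Function.comp_def] at h
  simp [pd, h]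
  ring

theorem pd_div {f g : (Fin 3 → ℝ) → ℝ} {x : Fin 3 → ℝ} (j : Fin 3)
    (hf : DifferentiableAt ℝ f x) (hg : DifferentiableAt ℝ g x) (h0 : g x ≠ 0) :
    pd j (fun y => f y / g y) x = (pd j f x * g x - f x * pd j g x) / g x ^ 2 := by
  simp only [div_eq_mul_inv]
  rw [pd_mul (g := fun y => (g y)⁻¹) j hf (hg.inv h0), pd_inv j hg h0]
  field_simp
  ring

theorem pd_log {f : (Fin 3 → ℝ) → ℝ} {x : Fin 3 → ℝ} (j : Fin 3)
    (hf : DifferentiableAt ℝ f x) (h0 : f x ≠ 0) :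
    pd j (fun y => Real.log (f y)) x = pd j f x / f x := by
  simp [pd, fderiv.log hf h0, div_eq_inv_mul]

set_option maxHeartbeats 4000000 in
/-- **Zero entropy production with the hard-core pressure.**
With the pressure taken to be the equilibrium pressure `P = -k_B Θ a⁻³ log (1 - N)` of the
hard-core lattice gas, the entropy-production expression vanishes identically. -/
theorem entropy_production_zero_hard_core
    (m kB a ε : ℝ) (hm : 0 < m) (hkB : 0 < kB) (ha : 0 < a) (hε : 0 < ε)
    (Θ N φ : (Fin 3 → ℝ) → ℝ) (u : (Fin 3 → ℝ) → Fin 3 → ℝ)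
    (hΘ : Differentiable ℝ Θ) (hN : Differentiable ℝ N) (hφ : Differentiable ℝ φ)
    (hu : ∀ i, Differentiable ℝ (fun x => u x i))
    (hΘpos : ∀ x, 0 < Θ x) (hN0 : ∀ x, 0 < N x) (hN1 : ∀ x, N x < 1)
    (ρ P β ξ : (Fin 3 → ℝ) → ℝ) (ζ f : (Fin 3 → ℝ) → Fin 3 → ℝ)
    (hρ : ρ = fun x => m * N x / a ^ 3)
    (hP : P = fun x => -(kB * Θ x / a ^ 3) * Real.log (1 - N x))
    (hβ : β = fun x => 1 / (kB * Θ x))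
    (hζ : ζ = fun x i => -(u x i) / (kB * Θ x))
    (hξ : ξ = fun x => -(m * φ x) / (kB * Θ x) - Real.log (N x) + Real.log (1 - N x)
      + (3 / 2) * Real.log (2 * π * m * kB * Θ x / ε ^ 2)
      + m * (∑ i, u x i ^ 2) / (2 * kB * Θ x))
    (hf : f = fun x i => -(pd i φ x)) :
    ∀ x : Fin 3 → ℝ,
      (∑ i, ζ x i * ρ x * f x i)
      + (∑ j, (ρ x * u x j / m) * pd j ξ x)
      + (∑ i, ∑ j, (ρ x * u x i * u x j + (if i = j then P x else 0))
          * pd j (fun y => ζ y i) x)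
      + (∑ j, ρ x * u x j
          * (3 * kB * Θ x / (2 * m) + P x / ρ x + (∑ i, u x i ^ 2) / 2 + φ x)
          * pd j β x)
      + (a ^ 3)⁻¹ * (∑ j, u x j * pd j N x / (1 - N x))
      - (a ^ 3)⁻¹ * Real.log (1 - N x) * (∑ j, pd j (fun y => u y j) x) = 0 := by
  subst hρ hP hβ hζ hξ hf
  intro x
  have hTx : 0 < Θ x := hΘpos x
  have hNx : 0 < N x := hN0 x
  have hN1x : 0 < 1 - N x := by linarith [hN1 x]
  have hπ : 0 < π := Real.pi_pos
  have hN1x' : (1:ℝ) - N x ≠ 0 := ne_of_gt hN1x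
  simp only [Fin.sum_univ_three, pow_two, div_eq_mul_inv]
  simp only [show ((0:Fin 3)=0) ↔ True from by decide, show ((1:Fin 3)=1) ↔ True from by decide,
    show ((2:Fin 3)=2) ↔ True from by decide, show ((0:Fin 3)=1) ↔ False from by decide,
    show ((0:Fin 3)=2) ↔ False from by decide, show ((1:Fin 3)=0) ↔ False from by decide,
    show ((1:Fin 3)=2) ↔ False from by decide, show ((2:Fin 3)=0) ↔ False from by decide,
    show ((2:Fin 3)=1) ↔ False from by decide, if_true, if_false]
  simp (disch := first
      | assumption
      | positivity
      | fun_prop (disch := first | assumption | positivity)) only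
    [pd_add, pd_sub, pd_neg, pd_mul, pd_inv, pd_log, pd_const]
  field_simp
  ring
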